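/- Let (Δx_j, Δy_j) ∈ ℝ² for j = 1,…,n be offset vectors with positive weights ω_j > 0, let L_j = (Δx_j, Δy_j, Δx_j²/2, Δy_j²/2, Δx_j·Δy_j) ∈ ℝ⁵, let L be the n×5 matrix with rows L_j, let ω = diag(ω_1², …, ω_n²), and let A = Lᵀ ω L; assume A is invertible. Let u : ℝ² → ℝ be a polynomial of total degree at most 2, let (x_i, y_i) ∈ ℝ², and set U_j = u(x_i + Δx_j, y_i + Δy_j) − u(x_i, y_i). Then the least-squares solution D = A⁻¹ Lᵀ ω U equals exactly the vector of derivatives (∂u/∂x, ∂u/∂y, ∂²u/∂x², ∂²u/∂y², ∂²u/∂x∂y) evaluated at (x_i, y_i). -/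
import Mathlib


open Matrix BigOperators
open MvPolynomial

/-- Polynomial consistency of GFDM: for a bivariate polynomial `u` of total
degree at most 2 the weighted least-squares recovery is exact, producing the
exact vector of first and second partial derivatives of `u` at `(xᵢ, yᵢ)`. -/

lemma taylor2_monomial (n0 n1 : ℕ) (h : n0 + n1 ≤ 2) (c x y a b : ℝ) :
    eval ![x+a, y+b] (monomial (Finsupp.single 0 n0 + Finsupp.single 1 n1) c) -
      eval ![x,y] (monomial (Finsupp.single 0 n0 + Finsupp.single 1 n1) c) =
    a * eval ![x,y] (pderiv (0:Fin 2) (monomial (Finsupp.single 0 n0 + Finsupp.single 1 n1) c))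
    + b * eval ![x,y] (pderiv (1:Fin 2) (monomial (Finsupp.single 0 n0 + Finsupp.single 1 n1) c))
    + a^2/2 * eval ![x,y] (pderiv (0:Fin 2) (pderiv (0:Fin 2) (monomial (Finsupp.single 0 n0 + Finsupp.single 1 n1) c)))
    + b^2/2 * eval ![x,y] (pderiv (1:Fin 2) (pderiv (1:Fin 2) (monomial (Finsupp.single 0 n0 + Finsupp.single 1 n1) c)))
    + a*b * eval ![x,y] (pderiv (1:Fin 2) (pderiv (0:Fin 2) (monomial (Finsupp.single 0 n0 + Finsupp.single 1 n1) c))) := by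
  have h0 : n0 ≤ 2 := le_trans (Nat.le_add_right _ _) h
  have h1 : n1 ≤ 2 := le_trans (Nat.le_add_left _ _) h
  interval_cases n0 <;> interval_cases n1 <;>
    simp_all [pderiv_monomial, eval_monomial, Finsupp.prod_add_index,
      Finsupp.prod_single_index] <;> ring
lemma taylor2 (u : MvPolynomial (Fin 2) ℝ) (hu : u.totalDegree ≤ 2) (x y a b : ℝ) :
    eval ![x+a, y+b] u - eval ![x,y] u =
    a * eval ![x,y] (pderiv (0:Fin 2) u)
    + b * eval ![x,y] (pderiv (1:Fin 2) u)
    + a^2/2 * eval ![x,y] (pderiv (0:Fin 2) (pderiv (0:Fin 2) u))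
    + b^2/2 * eval ![x,y] (pderiv (1:Fin 2) (pderiv (1:Fin 2) u))
    + a*b * eval ![x,y] (pderiv (1:Fin 2) (pderiv (0:Fin 2) u)) := by
  conv_lhs => rw [u.as_sum]
  conv_rhs => rw [u.as_sum]
  simp only [map_sum, Finset.mul_sum, ← Finset.sum_sub_distrib, ← Finset.sum_add_distrib]
  refine Finset.sum_congr rfl fun d hd => ?_
  have hdeg : d 0 + d 1 ≤ 2 := by
    have h1 := MvPolynomial.le_totalDegree hd
    have h2 : (d.sum fun _ e => e) = d 0 + d 1 := by
      rw [Finsupp.sum_fintype _ _ (fun _ => rfl), Fin.sum_univ_two]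
    omega
  have hd' : d = Finsupp.single 0 (d 0) + Finsupp.single 1 (d 1) := by
    ext i; fin_cases i <;> simp
  set c := u.coeff d with hc
  rw [hd']
  exact taylor2_monomial (d 0) (d 1) hdeg c x y a b
theorem gfdm_exact_on_quadratics
    (n : ℕ) (Δx Δy : Fin n → ℝ) (ω : Fin n → ℝ)
    (hω : ∀ j, 0 < ω j)
    (L : Matrix (Fin n) (Fin 5) ℝ)
    (hL : ∀ j, L j = ![Δx j, Δy j, (Δx j) ^ 2 / 2, (Δy j) ^ 2 / 2, Δx j * Δy j])
    (W : Matrix (Fin n) (Fin n) ℝ)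
    (hW : W = Matrix.diagonal (fun j => (ω j) ^ 2))
    (A : Matrix (Fin 5) (Fin 5) ℝ) (hA : A = Lᵀ * W * L)
    (hAunit : IsUnit A)
    (u : MvPolynomial (Fin 2) ℝ) (hu : u.totalDegree ≤ 2)
    (xi yi : ℝ) (U : Fin n → ℝ)
    (hU : ∀ j, U j =
      MvPolynomial.eval ![xi + Δx j, yi + Δy j] u - MvPolynomial.eval ![xi, yi] u) :
    A⁻¹ *ᵥ ((Lᵀ * W) *ᵥ U) =
      ![MvPolynomial.eval ![xi, yi] (MvPolynomial.pderiv (0 : Fin 2) u),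
        MvPolynomial.eval ![xi, yi] (MvPolynomial.pderiv (1 : Fin 2) u),
        MvPolynomial.eval ![xi, yi]
          (MvPolynomial.pderiv (0 : Fin 2) (MvPolynomial.pderiv (0 : Fin 2) u)),
        MvPolynomial.eval ![xi, yi]
          (MvPolynomial.pderiv (1 : Fin 2) (MvPolynomial.pderiv (1 : Fin 2) u)),
        MvPolynomial.eval ![xi, yi]
          (MvPolynomial.pderiv (1 : Fin 2) (MvPolynomial.pderiv (0 : Fin 2) u))] := by
  set D : Fin 5 → ℝ :=
    ![MvPolynomial.eval ![xi, yi] (MvPolynomial.pderiv (0 : Fin 2) u),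
      MvPolynomial.eval ![xi, yi] (MvPolynomial.pderiv (1 : Fin 2) u),
      MvPolynomial.eval ![xi, yi]
        (MvPolynomial.pderiv (0 : Fin 2) (MvPolynomial.pderiv (0 : Fin 2) u)),
      MvPolynomial.eval ![xi, yi]
        (MvPolynomial.pderiv (1 : Fin 2) (MvPolynomial.pderiv (1 : Fin 2) u)),
      MvPolynomial.eval ![xi, yi]
        (MvPolynomial.pderiv (1 : Fin 2) (MvPolynomial.pderiv (0 : Fin 2) u))] with hD
  have hUL : U = L *ᵥ D := by
    funext j
    rw [hU j, taylor2 u hu xi yi (Δx j) (Δy j)]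
    simp [Matrix.mulVec, dotProduct, Fin.sum_univ_five, hL j, hD]
  rw [hUL, Matrix.mulVec_mulVec, Matrix.mulVec_mulVec, Matrix.mul_assoc, ← hA,
    Matrix.nonsing_inv_mul A ((Matrix.isUnit_iff_isUnit_det A).mp hAunit),
    Matrix.one_mulVec]
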